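/- For every integer m ≥ 0 the following identity holds in the field ℚ(q,z,w): ∑_{a=0}^m [m,a]_q · (wz)^a q^{a(a−1)} / ( (z^{−1} q^{2−2m})_{m−a} · (wz)_a ) = ∏_{i=1}^m (1 − w q^{i−m}) / ( (z^{−1} q^{2(1−m)})_m · (wz)_m ). Equivalently (with w = q^ν), the sl_2 fermionic sum on the whole line with one corner at 0 of angle ν satisfies X^{(0,ν)}_m(q,z) = [ν,m] / ( (z^{−1} q^{2(1−m)})_m (q^ν z)_m ), where [ν,m] = (q^{ν−m+1})_m / (q)_m. -/

import Mathlib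

/- STATEMENT 5: identity in ℚ(q,z,w):
   ∑_{a=0}^m [m,a]_q (wz)^a q^{a(a−1)} / ((z⁻¹q^{2−2m})_{m−a} (wz)_a)
     = ∏_{i=1}^m (1 − w q^{i−m}) / ((z⁻¹ q^{2(1−m)})_m (wz)_m). -/

noncomputable section

open scoped BigOperators

/-- The field ℚ(q,z,w). -/
abbrev F5 : Type := FractionRing (MvPolynomial (Fin 3) ℚ)

def q5 : F5 := algebraMap (MvPolynomial (Fin 3) ℚ) F5 (MvPolynomial.X 0)
def z5 : F5 := algebraMap (MvPolynomial (Fin 3) ℚ) F5 (MvPolynomial.X 1)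
def w5 : F5 := algebraMap (MvPolynomial (Fin 3) ℚ) F5 (MvPolynomial.X 2)

/-- `(x)_n = ∏_{i=1}^n (1 - q^{i-1} x)` -/
def poch5 (x : F5) (n : ℕ) : F5 := ∏ i ∈ Finset.range n, (1 - q5 ^ i * x)

/-- `(q)_n = ∏_{k=1}^n (1 - q^k)` -/
def qp5 (n : ℕ) : F5 := ∏ k ∈ Finset.range n, (1 - q5 ^ (k + 1))

/-- q-binomial coefficient `[m,a]_q = (q)_m / ((q)_a (q)_{m-a})` -/
def qbinom5 (m a : ℕ) : F5 := qp5 m / (qp5 a * qp5 (m - a))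



lemma algMap_ne (p : MvPolynomial (Fin 3) ℚ) (f : Fin 3 → ℚ)
    (h : MvPolynomial.eval f p ≠ 0) :
    (algebraMap (MvPolynomial (Fin 3) ℚ) F5) p ≠ 0 := by
  intro h0
  apply h
  have hp : p = 0 := IsFractionRing.injective (MvPolynomial (Fin 3) ℚ) F5 (by rw [h0, map_zero])
  rw [hp]; simp

lemma hq5 : q5 ≠ 0 := by
  apply algMap_ne _ (fun _ => 1); simp

lemma hz5 : z5 ≠ 0 := by
  apply algMap_ne _ (fun _ => 1); simp

lemma hqk (k : ℕ) : (1 : F5) - q5 ^ (k+1) ≠ 0 := by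
  have h : (1 : F5) - q5 ^ (k+1) =
      algebraMap (MvPolynomial (Fin 3) ℚ) F5 (1 - MvPolynomial.X 0 ^ (k+1)) := by
    simp [q5]
  rw [h]
  apply algMap_ne _ (fun _ => 2)
  simp only [map_sub, map_one, map_pow, MvPolynomial.eval_X]
  have : (1:ℚ) < 2 ^ (k+1) := one_lt_pow₀ (by norm_num) (by omega)
  intro hc; rw [sub_eq_zero] at hc; linarith

lemma hwz (i : ℕ) : (1 : F5) - q5 ^ i * (w5 * z5) ≠ 0 := by
  have h : (1 : F5) - q5 ^ i * (w5 * z5) =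
      algebraMap (MvPolynomial (Fin 3) ℚ) F5
        (1 - MvPolynomial.X 0 ^ i * (MvPolynomial.X 2 * MvPolynomial.X 1)) := by
    simp [q5, z5, w5]
  rw [h]
  apply algMap_ne _ (fun _ => 2)
  simp only [map_sub, map_one, map_mul, map_pow, MvPolynomial.eval_X]
  intro hc
  rw [sub_eq_zero] at hc
  have h1 : (1:ℚ) ≤ 2 ^ i := one_le_pow₀ (by norm_num)
  nlinarith

lemma hzq (n : ℕ) : z5 ≠ q5 ^ n := by
  intro h
  apply algMap_ne (MvPolynomial.X 1 - MvPolynomial.X 0 ^ n) (fun j => if j = 0 then 1 else 2)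
  · simp only [map_sub, map_pow, MvPolynomial.eval_X]
    norm_num
  · rw [map_sub, map_pow]
    show z5 - q5 ^ n = 0
    rw [h, sub_self]

lemma hzq2 (n : ℕ) : z5 * q5 ^ n ≠ 1 := by
  intro h
  apply algMap_ne (MvPolynomial.X 1 * MvPolynomial.X 0 ^ n - 1) (fun j => if j = 0 then 1 else 2)
  · simp only [map_sub, map_one, map_mul, map_pow, MvPolynomial.eval_X]
    norm_num
  · rw [map_sub, map_mul, map_pow, map_one]
    show z5 * q5 ^ n - 1 = 0
    rw [h, sub_self]

lemma hzA (i : ℕ) (e : ℤ) : (1 : F5) - q5 ^ i * (z5⁻¹ * q5 ^ e) ≠ 0 := by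
  intro h
  have h1 : q5 ^ i * q5 ^ e = z5 := by
    have h' : q5 ^ i * (z5⁻¹ * q5 ^ e) = 1 := (sub_eq_zero.mp h).symm
    field_simp at h'
    rw [div_eq_one_iff_eq hz5] at h'
    exact h'
  have h2 : q5 ^ ((i:ℤ) + e) = z5 := by
    rw [zpow_add₀ hq5, zpow_natCast]; exact h1
  rcases Int.eq_nat_or_neg ((i:ℤ) + e) with ⟨n, hn | hn⟩
  · rw [hn, zpow_natCast] at h2
    exact hzq n h2.symm
  · rw [hn] at h2
    apply hzq2 n
    rw [← h2]
    rw [← zpow_natCast q5 n, ← zpow_add₀ hq5]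
    simp


/-- Gaussian binomial defined by Pascal recursion. -/
def qb : ℕ → ℕ → F5
  | 0, 0 => 1
  | 0, _+1 => 0
  | _+1, 0 => 1
  | m+1, a+1 => qb m (a+1) + q5 ^ (m - a) * qb m a

lemma qb_zero_right (m : ℕ) : qb m 0 = 1 := by cases m <;> rfl

lemma qb_eq_zero : ∀ m a, m < a → qb m a = 0 := by
  intro m
  induction m with
  | zero => intro a h; match a, h with | a+1, _ => rfl
  | succ m ih =>
    intro a h
    match a, h with
    | a+1, h =>
      show qb m (a+1) + q5 ^ (m - a) * qb m a = 0
      rw [ih (a+1) (by omega), ih a (by omega), mul_zero, add_zero]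

lemma qp5_ne (n : ℕ) : qp5 n ≠ 0 := by
  rw [qp5]
  exact Finset.prod_ne_zero_iff.mpr (fun k _ => hqk k)

lemma qp5_succ (n : ℕ) : qp5 (n+1) = qp5 n * (1 - q5 ^ (n+1)) := by
  rw [qp5, qp5, Finset.prod_range_succ]

lemma qb_mul : ∀ m, ∀ a ≤ m, qb m a * (qp5 a * qp5 (m - a)) = qp5 m := by
  intro m
  induction m with
  | zero =>
    intro a ha
    interval_cases a
    simp [qb, qp5]
  | succ m ih =>
    intro a ha
    match a with
    | 0 => simp [qb_zero_right, qp5]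
    | b+1 =>
      show (qb m (b+1) + q5 ^ (m - b) * qb m b) * (qp5 (b+1) * qp5 (m + 1 - (b+1))) = qp5 (m+1)
      have h1 : m + 1 - (b+1) = m - b := by omega
      rw [h1]
      rcases Nat.lt_or_ge b m with hbm | hbm
      · -- b + 1 ≤ m
        have ih1 := ih (b+1) (by omega)
        have ih2 := ih b (by omega)
        have h2 : m - (b+1) = m - b - 1 := by omega
        rw [h2] at ih1
        have h3 : qp5 (m - b) = qp5 (m - b - 1) * (1 - q5 ^ (m - b)) := by
          have hmb : m - b = (m - b - 1) + 1 := by omega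
          rw [hmb, qp5_succ, ← hmb]
        have h4 : qp5 (b+1) = qp5 b * (1 - q5 ^ (b+1)) := qp5_succ b
        have h5 : qp5 (m+1) = qp5 m * (1 - q5 ^ (m+1)) := qp5_succ m
        have h6 : q5 ^ (m+1) = q5 ^ (m - b) * q5 ^ (b+1) := by
          rw [← pow_add]; congr 1; omega
        rw [h4] at ih1
        rw [h3] at ih2
        rw [h5, h6, h3, h4]
        linear_combination (1 - q5 ^ (m - b)) * ih1 +
          q5 ^ (m - b) * (1 - q5 ^ (b+1)) * ih2
      · -- b = m
        have hb : b = m := by omega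
        rw [hb]
        rw [qb_eq_zero m (m+1) (by omega), zero_add, Nat.sub_self, pow_zero, one_mul]
        have ih2 := ih m le_rfl
        rw [Nat.sub_self] at ih2
        have h5 : qp5 (m+1) = qp5 m * (1 - q5 ^ (m+1)) := qp5_succ m
        rw [h5]
        have h0 : qp5 0 = 1 := by simp [qp5]
        rw [h0] at ih2 ⊢
        linear_combination (1 - q5 ^ (m+1)) * ih2

lemma qbinom_eq (m a : ℕ) (h : a ≤ m) : qbinom5 m a = qb m a := by
  rw [qbinom5, ← qb_mul m a h, mul_div_assoc,
    div_self (mul_ne_zero (qp5_ne a) (qp5_ne (m-a))), mul_one]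
lemma hFB (x B : F5) : ∀ b : ℕ,
    (∏ t ∈ Finset.range b, (q5 ^ t * x * (q5 ^ t - B))) * (q5 ^ b - B)
      = (1 - B) * ∏ t ∈ Finset.range b, (q5 ^ t * (q5 * x) * (q5 ^ t - B / q5)) := by
  intro b
  induction b with
  | zero => simp
  | succ b ihb =>
    rw [Finset.prod_range_succ, Finset.prod_range_succ]
    have hb : q5 ^ b * (q5 * x) * (q5 ^ b - B / q5) = q5 ^ b * x * (q5 ^ (b+1) - B) := by
      linear_combination (-(q5 ^ b * x * B)) * mul_inv_cancel₀ hq5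
    rw [hb]
    linear_combination (q5 ^ b * x * (q5 ^ (b+1) - B)) * ihb

lemma key : ∀ m : ℕ, ∀ x B : F5,
    ∑ a ∈ Finset.range (m+1),
      qb m a * (∏ t ∈ Finset.range a, (q5 ^ t * x * (q5 ^ t - B))) *
        (∏ i ∈ Finset.Ico a m, (1 - q5 ^ i * x))
    = ∏ j ∈ Finset.range m, (1 - q5 ^ j * (x * B)) := by
  intro m
  induction m with
  | zero => intro x B; simp [qb]
  | succ m ih =>
    intro x B
    rw [Finset.sum_range_succ']
    -- the shifted sum: terms with a = b+1
    have hterm : ∀ b ∈ Finset.range (m+1),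
        qb (m+1) (b+1) * (∏ t ∈ Finset.range (b+1), (q5 ^ t * x * (q5 ^ t - B))) *
          (∏ i ∈ Finset.Ico (b+1) (m+1), (1 - q5 ^ i * x))
        = qb m (b+1) * (∏ t ∈ Finset.range (b+1), (q5 ^ t * x * (q5 ^ t - B))) *
            (∏ i ∈ Finset.Ico (b+1) (m+1), (1 - q5 ^ i * x))
          + (q5 ^ m * x * (1 - B)) *
            (qb m b * (∏ t ∈ Finset.range b, (q5 ^ t * (q5 * x) * (q5 ^ t - B / q5))) *
              (∏ i ∈ Finset.Ico b m, (1 - q5 ^ i * (q5 * x)))) := by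
      intro b hb
      rw [Finset.mem_range] at hb
      have hbm : b ≤ m := by omega
      show (qb m (b+1) + q5 ^ (m - b) * qb m b) * _ * _ = _
      have hIco : (∏ i ∈ Finset.Ico (b+1) (m+1), (1 - q5 ^ i * x))
          = ∏ i ∈ Finset.Ico b m, (1 - q5 ^ i * (q5 * x)) := by
        rw [Finset.prod_Ico_eq_prod_range, Finset.prod_Ico_eq_prod_range]
        have h1 : m + 1 - (b + 1) = m - b := by omega
        rw [h1]
        apply Finset.prod_congr rfl
        intro i _
        have : q5 ^ (b + i) * (q5 * x) = q5 ^ (b + 1 + i) * x := by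
          rw [show b + 1 + i = (b + i) + 1 by omega, pow_succ]
          ring
        rw [this]
      have hF : (∏ t ∈ Finset.range (b+1), (q5 ^ t * x * (q5 ^ t - B)))
          = (∏ t ∈ Finset.range b, (q5 ^ t * x * (q5 ^ t - B))) * (q5 ^ b * x * (q5 ^ b - B)) :=
        Finset.prod_range_succ _ b
      have hm : q5 ^ m = q5 ^ (m - b) * q5 ^ b := by
        rw [← pow_add]; congr 1; omega
      have h2 := hFB x B b
      rw [hIco, hF, hm]
      linear_combination (q5 ^ (m - b) * qb m b * q5 ^ b * x *
        (∏ i ∈ Finset.Ico b m, (1 - q5 ^ i * (q5 * x)))) * h2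
    rw [Finset.sum_congr rfl hterm, Finset.sum_add_distrib]
    -- second piece
    have hS2 : ∑ b ∈ Finset.range (m+1), (q5 ^ m * x * (1 - B)) *
        (qb m b * (∏ t ∈ Finset.range b, (q5 ^ t * (q5 * x) * (q5 ^ t - B / q5))) *
          (∏ i ∈ Finset.Ico b m, (1 - q5 ^ i * (q5 * x))))
        = q5 ^ m * x * (1 - B) * ∏ j ∈ Finset.range m, (1 - q5 ^ j * (x * B)) := by
      rw [← Finset.mul_sum, ih (q5 * x) (B / q5)]
      congr 1
      apply Finset.prod_congr rfl
      intro j _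
      have : q5 * x * (B / q5) = x * B := by
        linear_combination x * B * mul_inv_cancel₀ hq5
      rw [this]
    rw [hS2]
    -- first piece: recombine with the a = 0 term
    have hz0 : qb (m+1) 0 = qb m 0 := by rw [qb_zero_right, qb_zero_right]
    rw [hz0]
    rw [add_right_comm]
    have hre := Finset.sum_range_succ' (fun a =>
      qb m a * (∏ t ∈ Finset.range a, (q5 ^ t * x * (q5 ^ t - B))) *
        (∏ i ∈ Finset.Ico a (m+1), (1 - q5 ^ i * x))) (m+1)
    beta_reduce at hre
    rw [← hre]
    rw [Finset.sum_range_succ]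
    rw [qb_eq_zero m (m+1) (by omega), zero_mul, zero_mul, add_zero]
    have hS1 : ∀ a ∈ Finset.range (m+1),
        qb m a * (∏ t ∈ Finset.range a, (q5 ^ t * x * (q5 ^ t - B))) *
          (∏ i ∈ Finset.Ico a (m+1), (1 - q5 ^ i * x))
        = (qb m a * (∏ t ∈ Finset.range a, (q5 ^ t * x * (q5 ^ t - B))) *
            (∏ i ∈ Finset.Ico a m, (1 - q5 ^ i * x))) * (1 - q5 ^ m * x) := by
      intro a ha
      rw [Finset.mem_range] at ha
      rw [Finset.prod_Ico_succ_top (by omega : a ≤ m)]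
      ring
    rw [Finset.sum_congr rfl hS1, ← Finset.sum_mul, ih x B]
    rw [Finset.prod_range_succ]
    ring


lemma hH (m : ℕ) : ∀ a, a ≤ m →
    (w5 * z5) ^ a * q5 ^ (a * (a - 1)) *
      ∏ i ∈ Finset.Ico (m - a) m, (1 - q5 ^ i * (z5⁻¹ * q5 ^ (2 - 2 * (m : ℤ))))
    = ∏ t ∈ Finset.range a, (q5 ^ t * (w5 * z5) * (q5 ^ t - z5⁻¹ * q5 ^ (1 - (m : ℤ)))) := by
  intro a
  induction a with
  | zero => simp
  | succ a iha =>
    intro ha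
    have iha' := iha (by omega)
    rw [Finset.prod_range_succ]
    have hbot : (∏ i ∈ Finset.Ico (m - (a+1)) m, (1 - q5 ^ i * (z5⁻¹ * q5 ^ (2 - 2 * (m : ℤ)))))
        = (1 - q5 ^ (m - (a+1)) * (z5⁻¹ * q5 ^ (2 - 2 * (m : ℤ)))) *
          ∏ i ∈ Finset.Ico (m - a) m, (1 - q5 ^ i * (z5⁻¹ * q5 ^ (2 - 2 * (m : ℤ)))) := by
      rw [Finset.prod_eq_prod_Ico_succ_bot (by omega : m - (a+1) < m)]
      have h1 : m - (a+1) + 1 = m - a := by omega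
      rw [h1]
    rw [hbot]
    have hexp : (a+1) * ((a+1) - 1) = a * (a - 1) + 2 * a := by
      cases a with
      | zero => rfl
      | succ n => simp only [Nat.add_sub_cancel, Nat.succ_sub_one]; ring
    rw [hexp, pow_add]
    have e1 : q5 ^ (2*a) * (q5 ^ (m - (a+1)) * q5 ^ ((2:ℤ) - 2 * m)) = q5 ^ a * q5 ^ ((1:ℤ) - m) := by
      rw [← zpow_natCast q5 (2*a), ← zpow_natCast q5 (m - (a+1)), ← zpow_natCast q5 a,
        ← zpow_add₀ hq5, ← zpow_add₀ hq5, ← zpow_add₀ hq5]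
      congr 1
      omega
    have hs : (w5 * z5) * q5 ^ (2*a) * (1 - q5 ^ (m - (a+1)) * (z5⁻¹ * q5 ^ (2 - 2 * (m : ℤ))))
        = q5 ^ a * (w5 * z5) * (q5 ^ a - z5⁻¹ * q5 ^ (1 - (m : ℤ))) := by
      linear_combination (-(w5 * z5 * z5⁻¹)) * e1
    linear_combination
      ((w5 * z5) * q5 ^ (2*a) * (1 - q5 ^ (m - (a+1)) * (z5⁻¹ * q5 ^ (2 - 2 * (m : ℤ))))) * iha' +
      (∏ t ∈ Finset.range a, (q5 ^ t * (w5 * z5) * (q5 ^ t - z5⁻¹ * q5 ^ (1 - (m : ℤ))))) * hs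

lemma poch5_wz_ne (n : ℕ) : poch5 (w5 * z5) n ≠ 0 := by
  rw [poch5]
  exact Finset.prod_ne_zero_iff.mpr (fun i _ => hwz i)

lemma poch5_zA_ne (e : ℤ) (n : ℕ) : poch5 (z5⁻¹ * q5 ^ e) n ≠ 0 := by
  rw [poch5]
  exact Finset.prod_ne_zero_iff.mpr (fun i _ => hzA i e)

theorem stmt_5 (m : ℕ) :
    ∑ a ∈ Finset.range (m + 1),
      qbinom5 m a * (w5 * z5) ^ a * q5 ^ (a * (a - 1)) /
        (poch5 (z5⁻¹ * q5 ^ (2 - 2 * (m : ℤ))) (m - a) * poch5 (w5 * z5) a)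
    = (∏ i ∈ Finset.range m, (1 - w5 * q5 ^ ((i : ℤ) + 1 - m))) /
        (poch5 (z5⁻¹ * q5 ^ (2 * (1 - (m : ℤ)))) m * poch5 (w5 * z5) m) := by
  have hexp2 : (2 : ℤ) * (1 - (m : ℤ)) = 2 - 2 * (m : ℤ) := by ring
  rw [hexp2]
  set A : F5 := z5⁻¹ * q5 ^ (2 - 2 * (m : ℤ)) with hA
  set B : F5 := z5⁻¹ * q5 ^ (1 - (m : ℤ)) with hB
  have hD : poch5 A m * poch5 (w5 * z5) m ≠ 0 :=
    mul_ne_zero (poch5_zA_ne _ m) (poch5_wz_ne m)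
  -- rewrite RHS numerator
  have hnum : (∏ i ∈ Finset.range m, (1 - w5 * q5 ^ ((i : ℤ) + 1 - m)))
      = ∏ j ∈ Finset.range m, (1 - q5 ^ j * ((w5 * z5) * B)) := by
    apply Finset.prod_congr rfl
    intro j _
    have h1 : q5 ^ (j : ℕ) * q5 ^ ((1:ℤ) - m) = q5 ^ ((j : ℤ) + 1 - m) := by
      rw [← zpow_natCast q5 j, ← zpow_add₀ hq5]
      congr 1
      ring
    have h2 : z5 * z5⁻¹ = 1 := mul_inv_cancel₀ hz5
    rw [hB]
    linear_combination w5 * q5 ^ ((j:ℤ) + 1 - (m:ℤ)) * h2 + w5 * z5 * z5⁻¹ * h1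
  rw [hnum]
  -- rewrite each term of the sum
  have hterm : ∀ a ∈ Finset.range (m + 1),
      qbinom5 m a * (w5 * z5) ^ a * q5 ^ (a * (a - 1)) /
        (poch5 A (m - a) * poch5 (w5 * z5) a)
      = (qb m a * (∏ t ∈ Finset.range a, (q5 ^ t * (w5 * z5) * (q5 ^ t - B))) *
          (∏ i ∈ Finset.Ico a m, (1 - q5 ^ i * (w5 * z5)))) /
        (poch5 A m * poch5 (w5 * z5) m) := by
    intro a ha
    rw [Finset.mem_range] at ha
    have ha' : a ≤ m := by omega
    rw [qbinom_eq m a ha']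
    rw [div_eq_div_iff (mul_ne_zero (poch5_zA_ne _ (m-a)) (poch5_wz_ne a)) hD]
    have hXsplit : poch5 (w5 * z5) a * (∏ i ∈ Finset.Ico a m, (1 - q5 ^ i * (w5 * z5)))
        = poch5 (w5 * z5) m := by
      rw [poch5, poch5]
      exact Finset.prod_range_mul_prod_Ico _ ha'
    have hAsplit : poch5 A (m - a) * (∏ i ∈ Finset.Ico (m - a) m, (1 - q5 ^ i * A))
        = poch5 A m := by
      rw [poch5, poch5]
      exact Finset.prod_range_mul_prod_Ico _ (by omega : m - a ≤ m)
    have hHa := hH m a ha'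
    rw [← hXsplit, ← hAsplit]
    linear_combination (qb m a * poch5 A (m - a) * poch5 (w5 * z5) a *
      (∏ i ∈ Finset.Ico a m, (1 - q5 ^ i * (w5 * z5)))) * hHa
  rw [Finset.sum_congr rfl hterm, ← Finset.sum_div, key m (w5 * z5) B]

end
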